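/- arXiv:2008.04455 — 2 statements merged into one kernel-verified Lean document; each statement's English description precedes it below -/
import Mathlib

section
/- Fix α > 0 and k > 0, and let a_k(t) = e^{αt/2} for t < k, a_k(t) = (α(t-k)/2 + 1)e^{αk/2} for t ≥ k, and b_k(t) = e^{αt} for t < k, b_k(t) = (α(t-k)+1)e^{αk} for t ≥ k. Then there exist constants c₁, c₂ > 0 depending only on α (not on k) such that for all t ∈ ℝ where the derivatives exist: (a_k'(t))^{-2} (a_k(t))^4 ≤ c₁ e^{αt}, (a_k(t))² ≤ e^{αt}, and (b_k'(t))^{-1} (b_k(t))² ≤ c₂ e^{αt}. -/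
private lemma key_ineq (u : ℝ) (hu : 0 ≤ u) : (1 + u) ^ 2 ≤ 4 * Real.exp u := by
  have h1 : 1 + u / 2 ≤ Real.exp (u / 2) := by
    have := Real.add_one_le_exp (u / 2); linarith
  have h2 : Real.exp (u / 2) * Real.exp (u / 2) = Real.exp u := by
    rw [← Real.exp_add]; ring_nf
  nlinarith [Real.exp_pos (u / 2)]

set_option maxHeartbeats 1000000 in
/-- Growth bounds for the truncated exponentials `a_k`, `b_k`, with constants
depending only on `α` (not on `k`):
`(a_k')⁻² a_k⁴ ≤ c₁ e^{αt}`, `a_k² ≤ e^{αt}` and `(b_k')⁻¹ b_k² ≤ c₂ e^{αt}`. -/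
theorem truncated_exponential_bounds (α : ℝ) (hα : 0 < α) :
    ∃ c₁ c₂ : ℝ, 0 < c₁ ∧ 0 < c₂ ∧
      ∀ k : ℝ, 0 < k →
      ∀ a b : ℝ → ℝ,
        (∀ t, a t = if t < k then Real.exp (α * t / 2)
            else (α * (t - k) / 2 + 1) * Real.exp (α * k / 2)) →
        (∀ t, b t = if t < k then Real.exp (α * t)
            else (α * (t - k) + 1) * Real.exp (α * k)) →
        ∀ t : ℝ, t ≠ k →
          (deriv a t) ^ (-2 : ℤ) * (a t) ^ 4 ≤ c₁ * Real.exp (α * t) ∧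
          (a t) ^ 2 ≤ Real.exp (α * t) ∧
          (deriv b t) ^ (-1 : ℤ) * (b t) ^ 2 ≤ c₂ * Real.exp (α * t) := by
  refine ⟨64 / α ^ 2, 4 / α, by positivity, by positivity, ?_⟩
  intro k hk a b ha hb t ht
  rcases lt_or_gt_of_ne ht with htk | htk
  · -- t < k
    have hada : deriv a t = Real.exp (α * t / 2) * (α / 2) := by
      have heq : a =ᶠ[nhds t] fun s => Real.exp (α * s / 2) := by
        filter_upwards [Iio_mem_nhds htk] with s hs
        rw [ha s, if_pos (Set.mem_Iio.mp hs)]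
      rw [heq.deriv_eq]
      have h : HasDerivAt (fun s : ℝ => Real.exp (α * s / 2))
          (Real.exp (α * t / 2) * (α * 1 / 2)) t :=
        (((hasDerivAt_id t).const_mul α).div_const 2).exp
      rw [h.deriv]; ring
    have hbdb : deriv b t = Real.exp (α * t) * α := by
      have heq : b =ᶠ[nhds t] fun s => Real.exp (α * s) := by
        filter_upwards [Iio_mem_nhds htk] with s hs
        rw [hb s, if_pos (Set.mem_Iio.mp hs)]
      rw [heq.deriv_eq]
      have h : HasDerivAt (fun s : ℝ => Real.exp (α * s))
          (Real.exp (α * t) * (α * 1)) t := ((hasDerivAt_id t).const_mul α).exp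
      rw [h.deriv]; ring
    have hat : a t = Real.exp (α * t / 2) := by rw [ha t, if_pos htk]
    have hbt : b t = Real.exp (α * t) := by rw [hb t, if_pos htk]
    have hE : Real.exp (α * t / 2) * Real.exp (α * t / 2) = Real.exp (α * t) := by
      rw [← Real.exp_add]; ring_nf
    have hEpos := Real.exp_pos (α * t / 2)
    have hEpos2 := Real.exp_pos (α * t)
    refine ⟨?_, ?_, ?_⟩
    · rw [hada, hat, zpow_neg]
      rw [inv_mul_le_iff₀ (by positivity)]
      have h2 : (Real.exp (α * t / 2) * (α / 2)) ^ (2 : ℤ) *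
          (64 / α ^ 2 * Real.exp (α * t)) = 16 * Real.exp (α * t) *
          (Real.exp (α * t / 2) * Real.exp (α * t / 2)) := by
        push_cast [zpow_two]; field_simp; ring
      rw [h2, hE]
      nlinarith
    · rw [hat]; nlinarith
    · rw [hbdb, hbt, zpow_neg_one]
      rw [inv_mul_le_iff₀ (by positivity)]
      have h2 : Real.exp (α * t) * α * (4 / α * Real.exp (α * t))
          = 4 * Real.exp (α * t) ^ 2 := by field_simp
      rw [h2]; nlinarith
  · -- t > k
    set s := t - k with hs
    have hspos : 0 < s := by simp [hs]; linarith
    set u := α * s / 2 with hu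
    have hupos : 0 ≤ u := by positivity
    set Ek := Real.exp (α * k / 2) with hEk
    set Fk := Real.exp (α * k) with hFk
    set Eu := Real.exp u with hEu
    have hEkpos : 0 < Ek := Real.exp_pos _
    have hFkpos : 0 < Fk := Real.exp_pos _
    have hEupos : 0 < Eu := Real.exp_pos _
    have hexpT : Real.exp (α * t) = Eu * Eu * (Ek * Ek) := by
      rw [hEu, hEk, ← Real.exp_add, ← Real.exp_add, ← Real.exp_add]
      congr 1; rw [hu, hs]; ring
    have hexpT' : Real.exp (α * t) = Eu * Eu * Fk := by
      rw [hEu, hFk, ← Real.exp_add, ← Real.exp_add]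
      congr 1; rw [hu, hs]; ring
    have hada : deriv a t = α / 2 * Ek := by
      have heq : a =ᶠ[nhds t] fun x => (α * (x - k) / 2 + 1) * Ek := by
        filter_upwards [Ioi_mem_nhds htk] with x hx
        rw [ha x, if_neg (not_lt.mpr (le_of_lt (Set.mem_Ioi.mp hx)))]
      rw [heq.deriv_eq]
      have h : HasDerivAt (fun x : ℝ => (α * (x - k) / 2 + 1) * Ek)
          (α * 1 / 2 * Ek) t :=
        (((((hasDerivAt_id t).sub_const k).const_mul α).div_const 2).add_const 1).mul_const Ek
      rw [h.deriv]; ring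
    have hbdb : deriv b t = α * Fk := by
      have heq : b =ᶠ[nhds t] fun x => (α * (x - k) + 1) * Fk := by
        filter_upwards [Ioi_mem_nhds htk] with x hx
        rw [hb x, if_neg (not_lt.mpr (le_of_lt (Set.mem_Ioi.mp hx)))]
      rw [heq.deriv_eq]
      have h : HasDerivAt (fun x : ℝ => (α * (x - k) + 1) * Fk)
          (α * 1 * Fk) t :=
        ((((hasDerivAt_id t).sub_const k).const_mul α).add_const 1).mul_const Fk
      rw [h.deriv]; ring
    have hat : a t = (u + 1) * Ek := by
      rw [ha t, if_neg (not_lt.mpr (le_of_lt htk)), hu, hs]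
    have hbt : b t = (2 * u + 1) * Fk := by
      rw [hb t, if_neg (not_lt.mpr (le_of_lt htk))]
      congr 1; rw [hu, hs]; ring
    have hkey : (1 + u) ^ 2 ≤ 4 * Eu := by rw [hEu]; exact key_ineq u hupos
    have hkey2 : 1 + u ≤ Eu := by
      rw [hEu]; have := Real.add_one_le_exp u; linarith
    have h1 : (1 + u) ^ 2 ≤ Eu * Eu := by nlinarith
    refine ⟨?_, ?_, ?_⟩
    · rw [hada, hat, zpow_neg]
      rw [inv_mul_le_iff₀ (by positivity)]
      rw [hexpT]
      have h2 : (α / 2 * Ek) ^ (2 : ℤ) * (64 / α ^ 2 * (Eu * Eu * (Ek * Ek)))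
          = 16 * (Eu * Eu) * (Ek * Ek) ^ 2 := by
        push_cast [zpow_two]; field_simp; ring
      rw [h2]
      have h4 : (1 + u) ^ 4 ≤ 16 * (Eu * Eu) := by nlinarith
      have h5 : ((u + 1) * Ek) ^ 4 = (1 + u) ^ 4 * (Ek * Ek) ^ 2 := by ring
      rw [h5]
      nlinarith [mul_le_mul_of_nonneg_right h4 (sq_nonneg (Ek * Ek))]
    · rw [hat, hexpT]
      nlinarith [mul_le_mul_of_nonneg_right h1 (mul_pos hEkpos hEkpos).le]
    · rw [hbdb, hbt, zpow_neg_one]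
      rw [inv_mul_le_iff₀ (by positivity)]
      rw [hexpT']
      have h2 : α * Fk * (4 / α * (Eu * Eu * Fk)) = 4 * (Eu * Eu) * (Fk * Fk) := by
        field_simp
      rw [h2]
      have h4 : (2 * u + 1) ^ 2 ≤ 4 * (Eu * Eu) := by nlinarith
      nlinarith [mul_le_mul_of_nonneg_right h4 (mul_pos hFkpos hFkpos).le]
end

section
/- Fix α > 1/2 and k > 0. Define a_k(t) = t^α for 0 < t < k and a_k(t) = [α²(t-k)/((2α-1)k) + 1] k^α for t ≥ k; and b_k(t) = t^{2α-1} for 0 < t < k and b_k(t) = [α²(t-k)/((2α-1)k) + 1] k^{2α-1} for t ≥ k. Then for all t > 0: (a_k'(t))² = (α²/(2α-1)) b_k'(t) at points of differentiability, and (a_k(t))² ≥ t·b_k(t). -/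
/-- Properties of the truncated powers `a_k`, `b_k`:
`(a_k')² = (α²/(2α-1)) b_k'` away from the corner, and `a_k² ≥ t b_k` on `(0,∞)`. -/
theorem truncated_power_identities (α k : ℝ) (hα : 1 / 2 < α) (hk : 0 < k)
    (a b : ℝ → ℝ)
    (ha : ∀ t, 0 < t → a t = if t < k then t ^ α
        else (α ^ 2 * (t - k) / ((2 * α - 1) * k) + 1) * k ^ α)
    (hb : ∀ t, 0 < t → b t = if t < k then t ^ (2 * α - 1)
        else (α ^ 2 * (t - k) / ((2 * α - 1) * k) + 1) * k ^ (2 * α - 1)) :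
    (∀ t : ℝ, 0 < t → t ≠ k → (deriv a t) ^ 2 = (α ^ 2 / (2 * α - 1)) * deriv b t) ∧
    (∀ t : ℝ, 0 < t → t * b t ≤ (a t) ^ 2) := by
  have h2a : (0:ℝ) < 2 * α - 1 := by linarith
  have h2a' : 2 * α - 1 ≠ 0 := ne_of_gt h2a
  constructor
  · intro t ht htk
    rcases lt_or_gt_of_ne htk with hlt | hgt
    · -- t < k : locally a = t^α, b = t^(2α-1)
      have hmem : t ∈ Set.Ioo (0:ℝ) k := ⟨ht, hlt⟩
      have hopen : IsOpen (Set.Ioo (0:ℝ) k) := isOpen_Ioo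
      have hnhds : Set.Ioo (0:ℝ) k ∈ nhds t := hopen.mem_nhds hmem
      have hae : a =ᶠ[nhds t] fun s => s ^ α := by
        filter_upwards [hnhds] with s hs
        rw [ha s hs.1, if_pos hs.2]
      have hbe : b =ᶠ[nhds t] fun s => s ^ (2 * α - 1) := by
        filter_upwards [hnhds] with s hs
        rw [hb s hs.1, if_pos hs.2]
      have hda : deriv a t = α * t ^ (α - 1) := by
        rw [hae.deriv_eq]
        exact (Real.hasDerivAt_rpow_const (Or.inl (ne_of_gt ht))).deriv
      have hdb : deriv b t = (2 * α - 1) * t ^ (2 * α - 1 - 1) := by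
        rw [hbe.deriv_eq]
        exact (Real.hasDerivAt_rpow_const (Or.inl (ne_of_gt ht))).deriv
      rw [hda, hdb]
      have hpow : (t ^ (α - 1)) ^ 2 = t ^ (2 * α - 1 - 1) := by
        rw [sq, ← Real.rpow_add ht]; congr 1; ring
      rw [mul_pow, hpow]
      field_simp [show α * 2 - 1 ≠ 0 by linarith]
    · -- t > k : linear part
      have hmem : t ∈ Set.Ioi k := hgt
      have hnhds : Set.Ioi k ∈ nhds t := isOpen_Ioi.mem_nhds hmem
      have hae : a =ᶠ[nhds t] fun s => (α ^ 2 * (s - k) / ((2 * α - 1) * k) + 1) * k ^ α := by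
        filter_upwards [hnhds] with s hs
        rw [ha s (hk.trans hs), if_neg (not_lt.2 (le_of_lt hs))]
      have hbe : b =ᶠ[nhds t] fun s =>
          (α ^ 2 * (s - k) / ((2 * α - 1) * k) + 1) * k ^ (2 * α - 1) := by
        filter_upwards [hnhds] with s hs
        rw [hb s (hk.trans hs), if_neg (not_lt.2 (le_of_lt hs))]
      have key : ∀ c : ℝ, HasDerivAt (fun s => (α ^ 2 * (s - k) / ((2 * α - 1) * k) + 1) * c)
          (α ^ 2 / ((2 * α - 1) * k) * c) t := by
        intro c
        have h := ((((hasDerivAt_id t).sub_const k).const_mul (α ^ 2)).div_const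
          ((2 * α - 1) * k)).add_const 1 |>.mul_const c
        refine h.congr_deriv ?_
        ring
      have hda : deriv a t = α ^ 2 / ((2 * α - 1) * k) * k ^ α := by
        rw [hae.deriv_eq]; exact (key _).deriv
      have hdb : deriv b t = α ^ 2 / ((2 * α - 1) * k) * k ^ (2 * α - 1) := by
        rw [hbe.deriv_eq]; exact (key _).deriv
      rw [hda, hdb]
      have hpow : (k ^ α) ^ 2 = k ^ (2 * α - 1) * k := by
        rw [sq, ← Real.rpow_add hk, show α + α = (2 * α - 1) + 1 by ring,
          Real.rpow_add hk, Real.rpow_one]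
      rw [mul_pow, hpow]
      field_simp
  · intro t ht
    rw [ha t ht, hb t ht]
    by_cases hlt : t < k
    · have hpow : (t ^ α) ^ 2 = t ^ (2 * α - 1) * t := by
        rw [sq, ← Real.rpow_add ht, show α + α = (2 * α - 1) + 1 by ring,
          Real.rpow_add ht, Real.rpow_one]
      rw [if_pos hlt, if_pos hlt, hpow, mul_comm]
    · rw [if_neg hlt, if_neg hlt]
      push_neg at hlt
      obtain ⟨c, hc⟩ : ∃ c : ℝ, c = α ^ 2 * (t - k) / ((2 * α - 1) * k) + 1 := ⟨_, rfl⟩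
      rw [← hc]
      have hc1 : 1 ≤ c := by
        have h0 : 0 ≤ α ^ 2 * (t - k) / ((2 * α - 1) * k) := by
          apply div_nonneg
          · exact mul_nonneg (sq_nonneg α) (by linarith)
          · positivity
        rw [hc]; linarith
      have hpow : (k ^ α) ^ 2 = k ^ (2 * α - 1) * k := by
        rw [sq, ← Real.rpow_add hk, show α + α = (2 * α - 1) + 1 by ring,
          Real.rpow_add hk, Real.rpow_one]
      rw [mul_pow, hpow]
      -- goal: t * (c * k^(2α-1)) ≤ c^2 * (k^(2α-1) * k)
      have hck : t ≤ c * k := by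
        have : c * k - t = (t - k) * (α - 1) ^ 2 / (2 * α - 1) := by
          rw [hc]; field_simp [show α * 2 - 1 ≠ 0 by linarith]; ring
        nlinarith [sq_nonneg (α - 1), div_nonneg (mul_nonneg (by linarith : (0:ℝ) ≤ t - k)
          (sq_nonneg (α - 1))) (le_of_lt h2a)]
      have hkpos : 0 < k ^ (2 * α - 1) := Real.rpow_pos_of_pos hk _
      nlinarith [mul_le_mul_of_nonneg_left hck (by linarith : (0:ℝ) ≤ c)]
end
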